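/- Let Φ be an n × N complex matrix whose columns u_1, ..., u_N are unit vectors with coherence μ = max_{r≠s} |⟨u_r, u_s⟩|. Then for every k-sparse vector x ∈ ℂ^N (a vector with at most k nonzero coordinates), one has |‖Φx‖₂² − ‖x‖₂²| ≤ (k−1)·μ·‖x‖₂². In particular Φ satisfies the Restricted Isometry Property of order k with constant δ = (k−1)μ. -/

import Mathlib

open Finset in
theorem stmt0 (n N k : ℕ) (Φ : Matrix (Fin n) (Fin N) ℂ) (μ : ℝ)
    (hunit : ∀ j : Fin N, ∑ i : Fin n, ‖Φ i j‖ ^ 2 = 1)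
    (hcoh : ∀ r s : Fin N, r ≠ s →
      ‖∑ i : Fin n, Φ i r * (starRingEnd ℂ) (Φ i s)‖ ≤ μ)
    (hμ : 0 ≤ μ)
    (x : Fin N → ℂ)
    (hsparse : (Finset.univ.filter (fun j => x j ≠ 0)).card ≤ k) :
    |(∑ i : Fin n, ‖Φ.mulVec x i‖ ^ 2) - ∑ j : Fin N, ‖x j‖ ^ 2| ≤
      ((k : ℝ) - 1) * μ * ∑ j : Fin N, ‖x j‖ ^ 2 := by
  classical
  set S : Finset (Fin N) := Finset.univ.filter (fun j => x j ≠ 0) with hS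
  set G : Fin N → Fin N → ℂ := fun r s => ∑ i : Fin n, Φ i r * (starRingEnd ℂ) (Φ i s) with hG
  set T : ℝ := ∑ j : Fin N, ‖x j‖ ^ 2 with hT
  have hGdiag : ∀ r, G r r = 1 := by
    intro r
    have h1 := hunit r
    simp only [hG]
    calc ∑ i : Fin n, Φ i r * (starRingEnd ℂ) (Φ i r)
        = ∑ i : Fin n, ((‖Φ i r‖ ^ 2 : ℝ) : ℂ) := by
          refine Finset.sum_congr rfl fun i _ => ?_
          rw [Complex.mul_conj, Complex.normSq_eq_norm_sq]
      _ = ((∑ i : Fin n, ‖Φ i r‖ ^ 2 : ℝ) : ℂ) := by push_cast; ring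
      _ = 1 := by rw [h1]; norm_num
  have expand : ∑ i : Fin n, (Φ.mulVec x i * (starRingEnd ℂ) (Φ.mulVec x i))
      = ∑ r : Fin N, ∑ s : Fin N, x r * (starRingEnd ℂ) (x s) * G r s := by
    simp only [Matrix.mulVec, dotProduct, map_sum, map_mul, hG,
      Finset.mul_sum, Finset.sum_mul]
    conv_rhs => rw [Finset.sum_comm]
    conv_lhs => rw [Finset.sum_comm]
    refine Finset.sum_congr rfl fun r _ => ?_
    conv_lhs => rw [Finset.sum_comm]
    exact Finset.sum_congr rfl fun s _ => Finset.sum_congr rfl fun i _ => by ring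
  set E : ℂ := ∑ r : Fin N, ∑ s ∈ Finset.univ.erase r, x r * (starRingEnd ℂ) (x s) * G r s with hE
  have split : ∑ r : Fin N, ∑ s : Fin N, x r * (starRingEnd ℂ) (x s) * G r s
      = ((T : ℝ) : ℂ) + E := by
    have : ∀ r : Fin N, ∑ s : Fin N, x r * (starRingEnd ℂ) (x s) * G r s
        = ((‖x r‖ ^ 2 : ℝ) : ℂ) + ∑ s ∈ Finset.univ.erase r, x r * (starRingEnd ℂ) (x s) * G r s := by
      intro r
      rw [← Finset.add_sum_erase _ _ (Finset.mem_univ r), hGdiag, mul_one, Complex.mul_conj,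
        Complex.normSq_eq_norm_sq]
    rw [Finset.sum_congr rfl fun r _ => this r, Finset.sum_add_distrib, hE, hT]
    push_cast
    ring
  have hre : (∑ i : Fin n, ‖Φ.mulVec x i‖ ^ 2)
      = (∑ i : Fin n, Φ.mulVec x i * (starRingEnd ℂ) (Φ.mulVec x i)).re := by
    rw [Complex.re_sum]
    refine Finset.sum_congr rfl fun i _ => ?_
    rw [Complex.mul_conj, Complex.normSq_eq_norm_sq, Complex.ofReal_re]
  have hmain : (∑ i : Fin n, ‖Φ.mulVec x i‖ ^ 2) - T = E.re := by
    rw [hre, expand, split]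
    simp
  rw [hmain]
  have hEbound : |E.re| ≤ ∑ r : Fin N, ∑ s ∈ Finset.univ.erase r, ‖x r‖ * ‖x s‖ * μ := by
    refine le_trans (Complex.abs_re_le_norm E) ?_
    refine le_trans (norm_sum_le _ _) (Finset.sum_le_sum fun r _ => ?_)
    refine le_trans (norm_sum_le _ _) (Finset.sum_le_sum fun s hs => ?_)
    rw [norm_mul, norm_mul, RingHomIsometric.norm_map]
    have hne : r ≠ s := (Finset.ne_of_mem_erase hs).symm
    exact mul_le_mul_of_nonneg_left (hcoh r s hne) (by positivity)
  have hzero : ∀ j : Fin N, j ∉ S → ‖x j‖ = 0 := by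
    intro j hj
    simp only [hS, Finset.mem_filter, Finset.mem_univ, true_and, not_not] at hj
    simp [hj]
  have hrestr : ∑ r : Fin N, ∑ s ∈ Finset.univ.erase r, ‖x r‖ * ‖x s‖ * μ
      = ∑ r ∈ S, ∑ s ∈ S.erase r, ‖x r‖ * ‖x s‖ * μ := by
    rw [← Finset.sum_subset (Finset.subset_univ S) (fun r _ hr => by
      simp [hzero r hr])]
    refine Finset.sum_congr rfl fun r hr => ?_
    refine (Finset.sum_subset (Finset.erase_subset_erase _ (Finset.subset_univ S)) ?_).symm
    intro s hsu hsS
    rcases Finset.mem_erase.mp hsu with ⟨hne, _⟩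
    by_cases h : s ∈ S
    · exact absurd (Finset.mem_erase.mpr ⟨hne, h⟩) hsS
    · simp [hzero s h]
  have hTS : T = ∑ j ∈ S, ‖x j‖ ^ 2 := by
    rw [hT]
    refine (Finset.sum_subset (Finset.subset_univ S) fun j _ hj => by simp [hzero j hj]).symm
  have hoff : ∑ r ∈ S, ∑ s ∈ S.erase r, ‖x r‖ * ‖x s‖
      = (∑ r ∈ S, ‖x r‖) ^ 2 - ∑ r ∈ S, ‖x r‖ ^ 2 := by
    calc ∑ r ∈ S, ∑ s ∈ S.erase r, ‖x r‖ * ‖x s‖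
        = ∑ r ∈ S, ‖x r‖ * ((∑ s ∈ S, ‖x s‖) - ‖x r‖) := by
          refine Finset.sum_congr rfl fun r hr => ?_
          rw [← Finset.mul_sum, Finset.sum_erase_eq_sub hr]
      _ = (∑ r ∈ S, ‖x r‖) ^ 2 - ∑ r ∈ S, ‖x r‖ ^ 2 := by
          simp only [mul_sub, Finset.sum_sub_distrib, ← Finset.sum_mul, sq]
  have hCS : (∑ r ∈ S, ‖x r‖) ^ 2 ≤ (S.card : ℝ) * ∑ r ∈ S, ‖x r‖ ^ 2 := by
    exact_mod_cast sq_sum_le_card_mul_sum_sq (s := S) (f := fun r => ‖x r‖)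
  have hTnonneg : 0 ≤ ∑ r ∈ S, ‖x r‖ ^ 2 := Finset.sum_nonneg fun r _ => sq_nonneg _
  have hk : (S.card : ℝ) ≤ (k : ℝ) := by exact_mod_cast hsparse
  calc |E.re| ≤ ∑ r ∈ S, ∑ s ∈ S.erase r, ‖x r‖ * ‖x s‖ * μ := by
        rw [← hrestr]; exact hEbound
    _ = ((∑ r ∈ S, ‖x r‖) ^ 2 - ∑ r ∈ S, ‖x r‖ ^ 2) * μ := by
        rw [← hoff]; simp [Finset.sum_mul]
    _ ≤ (((k : ℝ) - 1) * ∑ r ∈ S, ‖x r‖ ^ 2) * μ := by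
        refine mul_le_mul_of_nonneg_right ?_ hμ
        nlinarith [mul_le_mul_of_nonneg_right hk hTnonneg]
    _ = ((k : ℝ) - 1) * μ * T := by rw [hTS]; ring
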